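/- Let f : ℝ³ → ℝ be three times continuously differentiable and write f_p, f_pp, f_ppp for its first, second and third partial derivatives with respect to the third argument. Define L(x, y, p, Y, P) := (Y − p)⁻¹ (P − f(x,y,p)) − (2/3) f_p(x,y,p) − (1/6) f_pp(x,y,p)(Y − p) for (x,y,p,Y,P) ∈ ℝ⁵ with Y ≠ p. Let I ⊆ ℝ be an open interval, y : I → ℝ twice differentiable, p : I → ℝ differentiable, with y'(x) ≠ p(x) for all x ∈ I. Then for every x ∈ I: ∂L/∂p evaluated at (x, y(x), p(x), y'(x), p'(x)) minus the derivative at x of the function t ↦ (y'(t) − p(t))⁻¹ equals (y'(x) − p(x))⁻² · [ y''(x) − f − f_p·(y'(x) − p(x)) − ½ f_pp·(y'(x) − p(x))² − (1/6) f_ppp·(y'(x) − p(x))³ ], where f, f_p, f_pp, f_ppp are evaluated at (x, y(x), p(x)). (Here ∂L/∂p denotes the partial derivative of L in its third slot, and (y'(t) − p(t))⁻¹ = ∂L/∂P along the curve.) -/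

import Mathlib

/-- First partial derivative of f(x,y,p) in the third argument. -/
noncomputable def fp (f : ℝ → ℝ → ℝ → ℝ) (x y q : ℝ) : ℝ :=
  deriv (fun t => f x y t) q

/-- Second partial derivative of f(x,y,p) in the third argument. -/
noncomputable def fpp (f : ℝ → ℝ → ℝ → ℝ) (x y q : ℝ) : ℝ :=
  deriv (fun t => fp f x y t) q

/-- Third partial derivative of f(x,y,p) in the third argument. -/
noncomputable def fppp (f : ℝ → ℝ → ℝ → ℝ) (x y q : ℝ) : ℝ :=
  deriv (fun t => fpp f x y t) q

/-- The Kropina Lagrangian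
L(x,y,p,Y,P) = (Y−p)⁻¹ (P − f(x,y,p)) − (2/3) f_p(x,y,p) − (1/6) f_pp(x,y,p) (Y−p). -/
noncomputable def Lag (f : ℝ → ℝ → ℝ → ℝ) (x y p Y P : ℝ) : ℝ :=
  (Y - p)⁻¹ * (P - f x y p) - (2/3) * fp f x y p - (1/6) * fpp f x y p * (Y - p)

/-- the Euler–Lagrange expression of the Kropina Lagrangian L with respect
to p along a transversal curve x ↦ (x, y(x), p(x)) equals
(y'−p)⁻² [ y'' − f − f_p(y'−p) − ½ f_pp(y'−p)² − (1/6) f_ppp(y'−p)³ ]. -/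
theorem stmt_15 (f : ℝ → ℝ → ℝ → ℝ)
    (hf : ContDiff ℝ 3 (fun q : ℝ × ℝ × ℝ => f q.1 q.2.1 q.2.2))
    (I : Set ℝ) (hI : IsOpen I)
    (y p : ℝ → ℝ)
    (hy : ∀ x ∈ I, DifferentiableAt ℝ y x)
    (hy' : ∀ x ∈ I, DifferentiableAt ℝ (deriv y) x)
    (hp : ∀ x ∈ I, DifferentiableAt ℝ p x)
    (htrans : ∀ x ∈ I, deriv y x ≠ p x) :
    ∀ x ∈ I,
      deriv (fun q => Lag f x (y x) q (deriv y x) (deriv p x)) (p x)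
          - deriv (fun t => (deriv y t - p t)⁻¹) x
        = ((deriv y x - p x)^2)⁻¹ *
            (deriv (deriv y) x - f x (y x) (p x)
              - fp f x (y x) (p x) * (deriv y x - p x)
              - (1/2) * fpp f x (y x) (p x) * (deriv y x - p x)^2
              - (1/6) * fppp f x (y x) (p x) * (deriv y x - p x)^3) := by
  intro x hx
  set Y := deriv y x with hY
  set P := deriv p x with hP
  set q0 := p x with hq0
  have hD : Y - q0 ≠ 0 := sub_ne_zero.mpr (htrans x hx)
  -- smoothness of g := f x (y x) ·
  have hg3 : ContDiff ℝ 3 (fun t => f x (y x) t) := by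
    have : ContDiff ℝ 3 (fun t : ℝ => (x, y x, t)) :=
      contDiff_const.prodMk (contDiff_const.prodMk contDiff_id)
    exact hf.comp this
  have hg3' : ContDiff ℝ ((2:ℕ)+1) (fun t => f x (y x) t) := by exact_mod_cast hg3
  have hgd : Differentiable ℝ (fun t => f x (y x) t) :=
    (contDiff_succ_iff_deriv.mp hg3').1
  have hfp2 : ContDiff ℝ 2 (fun t => fp f x (y x) t) :=
    (contDiff_succ_iff_deriv.mp hg3').2.2
  have hfp2' : ContDiff ℝ ((1:ℕ)+1) (fun t => fp f x (y x) t) := by exact_mod_cast hfp2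
  have hfpd : Differentiable ℝ (fun t => fp f x (y x) t) :=
    (contDiff_succ_iff_deriv.mp hfp2').1
  have hfpp1 : ContDiff ℝ 1 (fun t => fpp f x (y x) t) := by
    have := (contDiff_succ_iff_deriv.mp hfp2').2.2
    exact_mod_cast this
  have hfppd : Differentiable ℝ (fun t => fpp f x (y x) t) :=
    hfpp1.differentiable one_ne_zero
  -- HasDerivAt facts at q0
  have h1 : HasDerivAt (fun t => f x (y x) t) (fp f x (y x) q0) q0 :=
    (hgd q0).hasDerivAt
  have h2 : HasDerivAt (fun t => fp f x (y x) t) (fpp f x (y x) q0) q0 :=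
    (hfpd q0).hasDerivAt
  have h3 : HasDerivAt (fun t => fpp f x (y x) t) (fppp f x (y x) q0) q0 :=
    (hfppd q0).hasDerivAt
  have hsub : HasDerivAt (fun q : ℝ => Y - q) (-1) q0 := by
    simpa using (hasDerivAt_id q0).const_sub Y
  have hinv : HasDerivAt (fun q : ℝ => (Y - q)⁻¹) (-(-1) / (Y - q0)^2) q0 :=
    hsub.inv hD
  have hL : HasDerivAt (fun q => Lag f x (y x) q Y P)
      ((-(-1) / (Y - q0)^2) * (P - f x (y x) q0)
        + (Y - q0)⁻¹ * (0 - fp f x (y x) q0)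
        - (2/3) * fpp f x (y x) q0
        - ((1/6 * fppp f x (y x) q0) * (Y - q0) + (1/6 * fpp f x (y x) q0) * (-1))) q0 := by
    unfold Lag
    exact ((hinv.mul ((hasDerivAt_const q0 P).sub h1)).sub
      ((h2.const_mul (2/3 : ℝ)))).sub ((h3.const_mul (1/6 : ℝ)).mul hsub)
  have hcurve : HasDerivAt (fun t => (deriv y t - p t)⁻¹)
      (-(deriv (deriv y) x - deriv p x) / (Y - q0)^2) x :=
    (((hy' x hx).hasDerivAt).sub ((hp x hx).hasDerivAt)).inv hD
  rw [hL.deriv, hcurve.deriv]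
  field_simp
  ring
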